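/- Let C̃ = conv(B ∪ {a}) ⊂ ℝᵈ be the cone over a (d−1)-dimensional ball B of radius r centered at p in the hyperplane {x_d = 0}, with apex a = (p, r/2). Then the width of C̃ equals r/2, and the width is attained uniquely in the direction (0,…,0,1) (up to sign). -/

import Mathlib

open RealInnerProductSpace

/-- The breadth of a set `C` in direction `u`: `max_{x∈C}⟨u,x⟩ − min_{x∈C}⟨u,x⟩`. -/
noncomputable def breadth {d : ℕ} (C : Set (EuclideanSpace ℝ (Fin d)))
    (u : EuclideanSpace ℝ (Fin d)) : ℝ :=
  sSup ((fun x => ⟪u, x⟫) '' C) - sInf ((fun x => ⟪u, x⟫) '' C)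

private lemma width_cone_real_aux (r s t : ℝ) (hr : 0 < r) (hs : 0 ≤ s)
    (h1 : s ^ 2 + t ^ 2 = 1) :
    r / 2 ≤ max (r * s) (r / 2 * t) + max (r * s) (-(r / 2 * t)) ∧
    (max (r * s) (r / 2 * t) + max (r * s) (-(r / 2 * t)) = r / 2 →
      s = 0 ∧ t ^ 2 = 1) := by
  have hst : 1 ≤ s + |t| := by
    by_contra h
    push_neg at h
    have h0 : 0 ≤ s + |t| := by positivity
    nlinarith [sq_abs t, mul_nonneg hs (abs_nonneg t)]
  have h2 : r * s + r / 2 * |t| ≤ max (r * s) (r / 2 * t) + max (r * s) (-(r / 2 * t)) := by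
    rcases le_or_gt 0 t with ht | ht
    · rw [abs_of_nonneg ht]
      have := le_max_right (r * s) (r / 2 * t)
      have := le_max_left (r * s) (-(r / 2 * t))
      linarith
    · rw [abs_of_neg ht]
      have := le_max_left (r * s) (r / 2 * t)
      have := le_max_right (r * s) (-(r / 2 * t))
      linarith
  have h3 : r / 2 + r / 2 * s ≤ r * s + r / 2 * |t| := by nlinarith
  have hrs : 0 ≤ r / 2 * s := by positivity
  constructor
  · linarith
  · intro heq
    have hs0 : s = 0 := by nlinarith
    refine ⟨hs0, ?_⟩
    nlinarith

/-- Let `C̃ = conv(B ∪ {a})` be the cone over a `d`-dimensional ball `B` of radius `r`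
centered at `p` in the hyperplane `{x_{d+1} = 0} ⊆ ℝ^{d+1}`, with apex `a = (p, r/2)`.
Then the width of `C̃` equals `r/2`, and it is attained uniquely (up to sign) in the vertical
direction `e = (0,…,0,1)`. -/
theorem width_cone_over_ball {d : ℕ}
    (p : EuclideanSpace ℝ (Fin (d + 1))) (hp : p (Fin.last d) = 0)
    (r : ℝ) (hr : 0 < r)
    (B : Set (EuclideanSpace ℝ (Fin (d + 1))))
    (hB : B = {x : EuclideanSpace ℝ (Fin (d + 1)) | x (Fin.last d) = 0 ∧ dist x p ≤ r})
    (e : EuclideanSpace ℝ (Fin (d + 1)))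
    (he : e = EuclideanSpace.single (Fin.last d) (1 : ℝ))
    (a : EuclideanSpace ℝ (Fin (d + 1))) (ha : a = p + (r / 2) • e)
    (C : Set (EuclideanSpace ℝ (Fin (d + 1)))) (hC : C = convexHull ℝ (B ∪ {a})) :
    (∀ u : EuclideanSpace ℝ (Fin (d + 1)), ‖u‖ = 1 → r / 2 ≤ breadth C u) ∧
    breadth C e = r / 2 ∧
    (∀ u : EuclideanSpace ℝ (Fin (d + 1)), ‖u‖ = 1 → breadth C u = r / 2 →
      u = e ∨ u = -e) := by
  have hinner_e : ∀ x : EuclideanSpace ℝ (Fin (d + 1)), ⟪e, x⟫ = x (Fin.last d) := by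
    intro x
    rw [he, EuclideanSpace.inner_single_left]
    simp
  have he1 : e (Fin.last d) = 1 := by
    rw [he, EuclideanSpace.single_apply, if_pos rfl]
  have haC : a ∈ C := by
    rw [hC]; exact subset_convexHull ℝ _ (Or.inr rfl)
  have hBC : B ⊆ C := fun x hx => by
    rw [hC]; exact subset_convexHull ℝ _ (Or.inl hx)
  -- key formula for the breadth in any direction
  have key : ∀ u : EuclideanSpace ℝ (Fin (d + 1)),
      breadth C u = max (r * ‖u - u (Fin.last d) • e‖) (r / 2 * u (Fin.last d)) +
        max (r * ‖u - u (Fin.last d) • e‖) (-(r / 2 * u (Fin.last d))) := by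
    intro u
    set t := u (Fin.last d) with ht
    set u' := u - t • e with hu'
    set s := ‖u'‖ with hs
    have hs0 : 0 ≤ s := norm_nonneg _
    have hudec : u = u' + t • e := by rw [hu']; abel
    have hu'c : u' (Fin.last d) = 0 := by simp [hu', he1, ht]
    have hu'last : ⟪e, u'⟫ = 0 := by rw [hinner_e]; exact hu'c
    have hu'last' : ⟪u', e⟫ = 0 := (real_inner_comm e u').trans hu'last
    have hsplit : ∀ y : EuclideanSpace ℝ (Fin (d + 1)),
        ⟪u, y⟫ = ⟪u', y⟫ + t * y (Fin.last d) := by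
      intro y
      conv_lhs => rw [hudec]
      rw [inner_add_left, real_inner_smul_left, hinner_e]
    have hlin : IsLinearMap ℝ (fun x : EuclideanSpace ℝ (Fin (d + 1)) => ⟪u, x⟫) :=
      ⟨fun x y => inner_add_right _ _ _, fun c x => by
        rw [smul_eq_mul]; exact real_inner_smul_right u x c⟩
    have hfa : ⟪u, a⟫ = ⟪u, p⟫ + r / 2 * t := by
      rw [ha, inner_add_right, real_inner_smul_right, hsplit e, hu'last', he1]
      ring
    -- bounds over B
    have hub : ∀ x ∈ B, ⟪u, x⟫ ≤ ⟪u, p⟫ + r * s := by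
      intro x hx
      rw [hB] at hx
      obtain ⟨hx0, hxd⟩ := hx
      have h1 : ⟪u, x⟫ = ⟪u, p⟫ + ⟪u', x - p⟫ := by
        rw [hsplit x, hsplit p, hp, hx0, inner_sub_right]
        ring
      have h3 : ⟪u', x - p⟫ ≤ s * r := by
        calc ⟪u', x - p⟫ ≤ ‖u'‖ * ‖x - p‖ := real_inner_le_norm _ _
          _ ≤ s * r := by
            have : ‖x - p‖ ≤ r := by rwa [← dist_eq_norm]
            exact mul_le_mul_of_nonneg_left this hs0
      linarith [h3]
    have hlb : ∀ x ∈ B, ⟪u, p⟫ - r * s ≤ ⟪u, x⟫ := by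
      intro x hx
      rw [hB] at hx
      obtain ⟨hx0, hxd⟩ := hx
      have h1 : ⟪u, x⟫ = ⟪u, p⟫ + ⟪u', x - p⟫ := by
        rw [hsplit x, hsplit p, hp, hx0, inner_sub_right]
        ring
      have h3 : -(s * r) ≤ ⟪u', x - p⟫ := by
        have h4 := abs_real_inner_le_norm u' (x - p)
        have h5 : ‖x - p‖ ≤ r := by rwa [← dist_eq_norm]
        have h6 : ‖u'‖ * ‖x - p‖ ≤ s * r := mul_le_mul_of_nonneg_left h5 hs0
        have h7 := neg_abs_le (⟪u', x - p⟫)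
        linarith
      linarith [h3]
    -- witnesses
    have hpB : p ∈ B := by
      rw [hB]
      exact ⟨hp, by simp [dist_self, hr.le]⟩
    have hex : ∃ x ∈ B, ⟪u, x⟫ = ⟪u, p⟫ + r * s := by
      by_cases hs' : s = 0
      · exact ⟨p, hpB, by rw [hs']; ring⟩
      · refine ⟨p + (r / s) • u', ?_, ?_⟩
        · rw [hB]
          constructor
          · simp [hp, hu'c]
          · rw [dist_self_add_left, norm_smul, ← hs]
            rw [Real.norm_eq_abs, abs_of_nonneg (by positivity : (0:ℝ) ≤ r / s)]
            field_simp
            exact le_rfl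
        · rw [inner_add_right, real_inner_smul_right, hsplit u',
            hu'c,
            real_inner_self_eq_norm_sq, ← hs]
          field_simp
          ring
    have hex' : ∃ x ∈ B, ⟪u, x⟫ = ⟪u, p⟫ - r * s := by
      by_cases hs' : s = 0
      · exact ⟨p, hpB, by rw [hs']; ring⟩
      · refine ⟨p - (r / s) • u', ?_, ?_⟩
        · rw [hB]
          constructor
          · simp [hp, hu'c]
          · rw [dist_self_sub_left, norm_smul, ← hs]
            rw [Real.norm_eq_abs, abs_of_nonneg (by positivity : (0:ℝ) ≤ r / s)]
            field_simp
            exact le_rfl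
        · rw [inner_sub_right, real_inner_smul_right, hsplit u',
            hu'c,
            real_inner_self_eq_norm_sq, ← hs]
          field_simp
          ring
    -- greatest and least elements of the image
    have hG : IsGreatest ((fun x => ⟪u, x⟫) '' C)
        (max (⟪u, p⟫ + r * s) (⟪u, p⟫ + r / 2 * t)) := by
      constructor
      · rcases max_cases (⟪u, p⟫ + r * s) (⟪u, p⟫ + r / 2 * t) with ⟨hm, _⟩ | ⟨hm, _⟩
        · obtain ⟨x, hx, hfx⟩ := hex
          exact ⟨x, hBC hx, by dsimp only; rw [hm, hfx]⟩
        · exact ⟨a, haC, by dsimp only; rw [hm, hfa]⟩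
      · rintro y ⟨x, hx, rfl⟩
        rw [hC] at hx
        refine convexHull_min ?_ (convex_halfSpace_le hlin _) hx
        rintro z (hz | rfl)
        · exact (hub z hz).trans (le_max_left _ _)
        · exact hfa.le.trans (le_max_right _ _)
    have hL : IsLeast ((fun x => ⟪u, x⟫) '' C)
        (min (⟪u, p⟫ - r * s) (⟪u, p⟫ + r / 2 * t)) := by
      constructor
      · rcases min_cases (⟪u, p⟫ - r * s) (⟪u, p⟫ + r / 2 * t) with ⟨hm, _⟩ | ⟨hm, _⟩
        · obtain ⟨x, hx, hfx⟩ := hex'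
          exact ⟨x, hBC hx, by dsimp only; rw [hm, hfx]⟩
        · exact ⟨a, haC, by dsimp only; rw [hm, hfa]⟩
      · rintro y ⟨x, hx, rfl⟩
        rw [hC] at hx
        refine convexHull_min ?_ (convex_halfSpace_ge hlin _) hx
        rintro z (hz | rfl)
        · exact (min_le_left _ _).trans (hlb z hz)
        · exact (min_le_right _ _).trans hfa.ge
    rw [breadth, hG.csSup_eq, hL.csInf_eq]
    rw [max_def, max_def, max_def, min_def]
    split_ifs <;> linarith
  -- norm decomposition
  have hnorm : ∀ u : EuclideanSpace ℝ (Fin (d + 1)), ‖u‖ = 1 →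
      ‖u - u (Fin.last d) • e‖ ^ 2 + (u (Fin.last d)) ^ 2 = 1 := by
    intro u hu
    set t := u (Fin.last d) with ht
    set u' := u - t • e with hu'
    have hudec : u = u' + t • e := by rw [hu']; abel
    have hu'e : ⟪u', t • e⟫ = 0 := by
      rw [real_inner_smul_right, real_inner_comm, hinner_e, hu']
      simp [he1, ht]
    have hne : ‖e‖ = 1 := by rw [he, EuclideanSpace.norm_single]; simp
    have h1 : (1 : ℝ) = ‖u' + t • e‖ ^ 2 := by rw [← hudec, hu]; norm_num
    rw [norm_add_sq_real, hu'e, norm_smul, Real.norm_eq_abs, hne, mul_one,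
      sq_abs] at h1
    linarith
  refine ⟨?_, ?_, ?_⟩
  · intro u hu
    rw [key u]
    exact (width_cone_real_aux r _ _ hr (norm_nonneg _) (hnorm u hu)).1
  · rw [key e, he1]
    have h0 : e - (1 : ℝ) • e = 0 := by rw [one_smul, sub_self]
    rw [h0, norm_zero, mul_zero, mul_one]
    rw [max_eq_right (by linarith : (0:ℝ) ≤ r / 2), max_eq_left (by linarith : -(r/2) ≤ 0)]
    ring
  · intro u hu hbr
    rw [key u] at hbr
    obtain ⟨hs0, ht1⟩ := (width_cone_real_aux r _ _ hr (norm_nonneg _) (hnorm u hu)).2 hbr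
    have hu0 : u - u (Fin.last d) • e = 0 := norm_eq_zero.mp hs0
    have hue : u = u (Fin.last d) • e := by
      have := sub_eq_zero.mp hu0
      exact this
    have h2 : (u (Fin.last d) - 1) * (u (Fin.last d) + 1) = 0 := by linear_combination ht1
    rcases mul_eq_zero.mp h2 with h | h
    · left; rw [hue, sub_eq_zero.mp h, one_smul]
    · right
      rw [hue, show u (Fin.last d) = -1 by linarith, neg_one_smul]
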